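/- Let n be a positive integer, θ = π/n, α real with 0 < α < π. For z, ζ complex with z·ζ·sin(kθ) + z·sin(α-kθ) - ζ·sin(α+kθ) + sin(kθ) ≠ 0 for all 0 ≤ k ≤ n-1, the function F(z,ζ) = ∏_{k=0}^{n-1} (conj(z)·ζ·sin(α+kθ) - (conj(z)+ζ)·sin(kθ) - sin(α-kθ))·(z·sin(kθ) - sin(α+kθ)) / [(z·ζ·sin(kθ) + z·sin(α-kθ) - ζ·sin(α+kθ) + sin(kθ))·(conj(z)·sin(α+kθ) - sin(kθ))] satisfies |F(z,ζ)| = 1 whenever z lies on either boundary arc: |z| = 1, or |z|²·sin(α-θ) + 2Re(z)·sinθ - sin(α+θ) = 0. -/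

import Mathlib

open Finset

private lemma sinsqC (α x : ℝ) :
    ((Real.sin (α - x) : ℂ)) * ((Real.sin (α + x) : ℂ)) =
      ((Real.sin α : ℂ)) ^ 2 - ((Real.sin x : ℂ)) ^ 2 := by
  have h : Real.sin (α - x) * Real.sin (α + x) = Real.sin α ^ 2 - Real.sin x ^ 2 := by
    rw [Real.sin_sub, Real.sin_add]
    linear_combination Real.sin α ^ 2 * Real.sin_sq_add_cos_sq x -
      Real.sin x ^ 2 * Real.sin_sq_add_cos_sq α
  exact_mod_cast h

private lemma keyA (α x : ℝ) (z w ζ : ℂ) :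
    (w * ζ * (Real.sin (α + x) : ℂ) - (w + ζ) * (Real.sin x : ℂ) - (Real.sin (α - x) : ℂ)) *
        (z * (Real.sin x : ℂ) - (Real.sin (α + x) : ℂ)) =
      (z * ζ * (Real.sin x : ℂ) + z * (Real.sin (α - x) : ℂ) - ζ * (Real.sin (α + x) : ℂ) +
          (Real.sin x : ℂ)) *
        (w * (Real.sin (α + x) : ℂ) - (Real.sin x : ℂ)) +
      (1 - z * w) * (Real.sin α : ℂ) ^ 2 := by
  linear_combination (1 - z * w) * sinsqC α x

private lemma keyB (α θ x : ℝ) (z w ζ : ℂ) :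
    (w * ζ * (Real.sin (α + x) : ℂ) - (w + ζ) * (Real.sin x : ℂ) - (Real.sin (α - x) : ℂ)) *
        (z * (Real.sin (x + θ) : ℂ) - (Real.sin (α + (x + θ)) : ℂ)) =
      (z * ζ * (Real.sin (x + θ) : ℂ) + z * (Real.sin (α - (x + θ)) : ℂ) -
          ζ * (Real.sin (α + (x + θ)) : ℂ) + (Real.sin (x + θ) : ℂ)) *
        (w * (Real.sin (α + x) : ℂ) - (Real.sin x : ℂ)) -
      (Real.sin α : ℂ) *
        (z * w * (Real.sin (α - θ) : ℂ) + (z + w) * (Real.sin θ : ℂ) - (Real.sin (α + θ) : ℂ)) := by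
  have hx : ((Real.sin x : ℂ)) ^ 2 + ((Real.cos x : ℂ)) ^ 2 = 1 := by
    exact_mod_cast Real.sin_sq_add_cos_sq x
  have ha : ((Real.sin α : ℂ)) ^ 2 + ((Real.cos α : ℂ)) ^ 2 = 1 := by
    exact_mod_cast Real.sin_sq_add_cos_sq α
  simp only [Real.sin_add, Real.sin_sub, Real.cos_add, Real.cos_sub]
  simp only [Complex.ofReal_add, Complex.ofReal_sub, Complex.ofReal_mul, Complex.ofReal_neg]
  linear_combination
    ((Real.sin α : ℂ) * (-(Real.sin θ : ℂ) * w - (Real.sin θ : ℂ) * z +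
      (Real.cos α : ℂ) * (Real.sin θ : ℂ) + (Real.cos α : ℂ) * (Real.sin θ : ℂ) * z * w +
      (Real.sin α : ℂ) * (Real.cos θ : ℂ) - (Real.sin α : ℂ) * (Real.cos θ : ℂ) * z * w)) * hx +
    ((z * w - 1) * ((Real.sin x : ℂ) * (Real.cos x : ℂ) * (Real.sin θ : ℂ) +
      (Real.sin x : ℂ) ^ 2 * (Real.cos θ : ℂ))) * ha

theorem stmt11 (n : ℕ) (hn : 0 < n) (θ α : ℝ) (hθ : θ = Real.pi / n)
    (hα : 0 < α ∧ α < Real.pi) (z ζ : ℂ)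
    (hden1 : ∀ k < n, z * ζ * (Real.sin (k * θ) : ℂ) + z * (Real.sin (α - k * θ) : ℂ) -
            ζ * (Real.sin (α + k * θ) : ℂ) + (Real.sin (k * θ) : ℂ) ≠ 0)
    (hden2 : ∀ k < n, (starRingEnd ℂ) z * (Real.sin (α + k * θ) : ℂ) - (Real.sin (k * θ) : ℂ) ≠ 0)
    (hbd : ‖z‖ = 1 ∨
      Complex.normSq z * Real.sin (α - θ) + 2 * z.re * Real.sin θ - Real.sin (α + θ) = 0) :
    ‖(∏ k ∈ Finset.range n,
      (((starRingEnd ℂ) z * ζ * (Real.sin (α + k * θ) : ℂ) -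
          ((starRingEnd ℂ) z + ζ) * (Real.sin (k * θ) : ℂ) - (Real.sin (α - k * θ) : ℂ)) *
        (z * (Real.sin (k * θ) : ℂ) - (Real.sin (α + k * θ) : ℂ))) /
      ((z * ζ * (Real.sin (k * θ) : ℂ) + z * (Real.sin (α - k * θ) : ℂ) -
          ζ * (Real.sin (α + k * θ) : ℂ) + (Real.sin (k * θ) : ℂ)) *
        ((starRingEnd ℂ) z * (Real.sin (α + k * θ) : ℂ) - (Real.sin (k * θ) : ℂ))))‖ = 1 := by
  set w : ℂ := (starRingEnd ℂ) z with hw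
  set p : ℕ → ℂ := fun k =>
    w * ζ * (Real.sin (α + k * θ) : ℂ) - (w + ζ) * (Real.sin (k * θ) : ℂ) -
      (Real.sin (α - k * θ) : ℂ) with hp
  set b : ℕ → ℂ := fun k => z * (Real.sin (k * θ) : ℂ) - (Real.sin (α + k * θ) : ℂ) with hb
  set q : ℕ → ℂ := fun k =>
    z * ζ * (Real.sin (k * θ) : ℂ) + z * (Real.sin (α - k * θ) : ℂ) -
      ζ * (Real.sin (α + k * θ) : ℂ) + (Real.sin (k * θ) : ℂ) with hq
  set a : ℕ → ℂ := fun k => w * (Real.sin (α + k * θ) : ℂ) - (Real.sin (k * θ) : ℂ) with ha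
  show ‖∏ k ∈ Finset.range n, (p k * b k) / (q k * a k)‖ = 1
  have hsinα : Real.sin α ≠ 0 := ne_of_gt (Real.sin_pos_of_pos_of_lt_pi hα.1 hα.2)
  have hsinαC : (Real.sin α : ℂ) ≠ 0 := by exact_mod_cast hsinα
  have hnR : (n : ℝ) ≠ 0 := Nat.cast_ne_zero.mpr hn.ne'
  have hnθ : (n : ℝ) * θ = Real.pi := by rw [hθ]; field_simp
  have hden : ∀ k ∈ range n, q k * a k ≠ 0 := fun k hk =>
    mul_ne_zero (hden1 k (mem_range.mp hk)) (hden2 k (mem_range.mp hk))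
  have main : ∏ k ∈ range n, p k * b k = ∏ k ∈ range n, q k * a k := by
    rcases hbd with h1 | h2
    · -- |z| = 1 : the factors are equal one by one
      have hz1 : z * w = 1 := by
        rw [hw, Complex.mul_conj]
        rw [Complex.normSq_eq_norm_sq, h1]
        norm_num
      refine prod_congr rfl fun k _ => ?_
      have hA := keyA α (k * θ) z w ζ
      rw [hz1] at hA
      simp only [sub_self, zero_mul, add_zero] at hA
      exact hA
    · -- second boundary arc : telescoping
      have hzw : z * w = (Complex.normSq z : ℂ) := by rw [hw, Complex.mul_conj]
      have hzadd : z + w = ((2 * z.re : ℝ) : ℂ) := by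
        rw [hw, Complex.add_conj]
      have hR : z * w * (Real.sin (α - θ) : ℂ) + (z + w) * (Real.sin θ : ℂ) -
          (Real.sin (α + θ) : ℂ) = 0 := by
        rw [hzw, hzadd]
        exact_mod_cast h2
      have step : ∀ k : ℕ, p k * b (k + 1) = q (k + 1) * a k := by
        intro k
        have hs : ((k + 1 : ℕ) : ℝ) * θ = (k : ℝ) * θ + θ := by push_cast; ring
        simp only [hp, hb, hq, ha, hs]
        linear_combination keyB α θ ((k : ℝ) * θ) z w ζ - (Real.sin α : ℂ) * hR
      have hb0 : b 0 = -(Real.sin α : ℂ) := by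
        simp [hb]
      have hbn : b n = (Real.sin α : ℂ) := by
        simp only [hb]
        rw [hnθ]
        simp [Real.sin_add]
      have hq0 : q 0 = (z - ζ) * (Real.sin α : ℂ) := by
        simp [hq]; ring
      have hqn : q n = (ζ - z) * (Real.sin α : ℂ) := by
        simp only [hq]
        rw [hnθ]
        simp [Real.sin_add, Real.sin_sub]
        ring
      have hq0ne : q 0 ≠ 0 := hden1 0 hn
      rw [hq0] at hq0ne
      have hzζ : z - ζ ≠ 0 := left_ne_zero_of_mul hq0ne
      have E2 : ∏ k ∈ range n, b (k + 1) = -∏ k ∈ range n, b k := by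
        have h3 : (∏ k ∈ range n, b (k + 1)) * b 0 = (∏ k ∈ range n, b k) * b n := by
          rw [← prod_range_succ', prod_range_succ]
        rw [hb0, hbn] at h3
        apply mul_right_cancel₀ hsinαC
        linear_combination -h3
      have E3 : ∏ k ∈ range n, q (k + 1) = -∏ k ∈ range n, q k := by
        have h3 : (∏ k ∈ range n, q (k + 1)) * q 0 = (∏ k ∈ range n, q k) * q n := by
          rw [← prod_range_succ', prod_range_succ]
        rw [hq0, hqn] at h3
        apply mul_right_cancel₀ (mul_ne_zero hzζ hsinαC)
        linear_combination h3
      have E1 : (∏ k ∈ range n, p k) * (∏ k ∈ range n, b (k + 1)) =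
          (∏ k ∈ range n, q (k + 1)) * (∏ k ∈ range n, a k) := by
        rw [← prod_mul_distrib, ← prod_mul_distrib]
        exact prod_congr rfl fun k _ => step k
      rw [E2, E3] at E1
      rw [prod_mul_distrib, prod_mul_distrib]
      linear_combination -E1
  rw [prod_div_distrib, main, div_self (prod_ne_zero_iff.mpr hden), norm_one]
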